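/- Let W₁,...,W_k be positive semi-definite self-adjoint operators on a finite-dimensional inner product space, δ_i := ‖W_i − I‖ (operator norm), and V_i(t) := I + t(W_i^{1/2} − I) for t ∈ [0,1]. Let R(t₁,...,t_k) = V₁(t₁)···V_k(t_k). Then for any subset T ⊆ {t₁,...,t_k}, the partial derivative ∂_T R satisfies ‖∂_T R‖ ≤ (∏_{t_i∈T} δ_i/(1+δ_i)) · ∏_{i=1}^k (1+δ_i). -/

import Mathlib

set_option maxHeartbeats 1000000
set_option synthInstance.maxHeartbeats 400000


open Matrix

attribute [local instance] Matrix.normedAddCommGroup Matrix.normedSpace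

open scoped ComplexOrder in
/-- The square root of a positive semi-definite matrix, as `Matrix.PosSemidef.sqrt` was defined
in the older Mathlib (removed since). -/
noncomputable def Matrix.PosSemidef.sqrt {n 𝕜 : Type*} [Fintype n] [RCLike 𝕜] [DecidableEq n]
    {A : Matrix n n 𝕜} (hA : A.PosSemidef) : Matrix n n 𝕜 :=
  hA.1.eigenvectorUnitary.1 * diagonal ((↑) ∘ (√·) ∘ hA.1.eigenvalues) *
  (star hA.1.eigenvectorUnitary : Matrix n n 𝕜)

/-- The operator norm (ℓ²→ℓ² norm) of a real matrix, via the associated continuous linear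
map on Euclidean space. -/
noncomputable def matOpNorm {d : ℕ} (A : Matrix (Fin d) (Fin d) ℝ) : ℝ :=
  ‖Matrix.toEuclideanCLM (𝕜 := ℝ) A‖

/-- Iterated partial derivative `∂_T F` of a matrix-valued function of `k` real variables,
taken with respect to the (distinct) variables listed in `L`. -/
noncomputable def pderivSeq {d k : ℕ} (L : List (Fin k))
    (F : (Fin k → ℝ) → Matrix (Fin d) (Fin d) ℝ) : (Fin k → ℝ) → Matrix (Fin d) (Fin d) ℝ :=
  L.foldr (fun i G => fun t => deriv (fun s => G (Function.update t i s)) (t i)) F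

namespace Stmt13Aux

variable {d k : ℕ}

lemma matOpNorm_nonneg (A : Matrix (Fin d) (Fin d) ℝ) : 0 ≤ matOpNorm A := norm_nonneg _

lemma matOpNorm_one_le : matOpNorm (1 : Matrix (Fin d) (Fin d) ℝ) ≤ 1 := by
  unfold matOpNorm
  rw [_root_.map_one, ContinuousLinearMap.one_def]
  exact ContinuousLinearMap.norm_id_le

lemma matOpNorm_mul_le (A B : Matrix (Fin d) (Fin d) ℝ) :
    matOpNorm (A * B) ≤ matOpNorm A * matOpNorm B := by
  unfold matOpNorm; rw [_root_.map_mul]; exact norm_mul_le _ _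

lemma matOpNorm_add_le (A B : Matrix (Fin d) (Fin d) ℝ) :
    matOpNorm (A + B) ≤ matOpNorm A + matOpNorm B := by
  unfold matOpNorm; rw [_root_.map_add]; exact norm_add_le _ _

lemma matOpNorm_smul (c : ℝ) (A : Matrix (Fin d) (Fin d) ℝ) :
    matOpNorm (c • A) = |c| * matOpNorm A := by
  unfold matOpNorm
  rw [_root_.map_smul]
  exact (norm_smul c (Matrix.toEuclideanCLM (𝕜 := ℝ) A)).trans (by rw [Real.norm_eq_abs])

lemma matOpNorm_diagonal_le (v : Fin d → ℝ) (c : ℝ) (hc : 0 ≤ c) (h : ∀ i, |v i| ≤ c) :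
    matOpNorm (Matrix.diagonal v) ≤ c := by
  apply ContinuousLinearMap.opNorm_le_bound _ hc
  intro x
  have hx : (WithLp.equiv 2 (Fin d → ℝ)) ((toEuclideanCLM (𝕜 := ℝ) (Matrix.diagonal v)) x)
      = fun i => v i * (WithLp.equiv 2 (Fin d → ℝ) x) i := by
    rw [show ∀ (A : Matrix (Fin d) (Fin d) ℝ) (x : EuclideanSpace ℝ (Fin d)), WithLp.equiv 2 (Fin d → ℝ) (toEuclideanCLM (𝕜 := ℝ) A x) = Matrix.toLin' A (WithLp.equiv 2 _ x) from fun _ _ => rfl, Matrix.toLin'_apply]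
    funext i
    rw [Matrix.mulVec_diagonal]
  have hcoord : ∀ i, ((toEuclideanCLM (𝕜 := ℝ) (Matrix.diagonal v)) x) i
      = v i * x i := fun i => congrFun hx i
  rw [EuclideanSpace.norm_eq, EuclideanSpace.norm_eq]
  have : ∑ i, ‖((toEuclideanCLM (𝕜 := ℝ) (Matrix.diagonal v)) x) i‖ ^ 2
      ≤ c ^ 2 * ∑ i, ‖x i‖ ^ 2 := by
    rw [Finset.mul_sum]
    apply Finset.sum_le_sum
    intro i _
    rw [hcoord i]
    have h1 : |v i * x i| ≤ c * |x i| :=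
      (abs_mul _ _).le.trans (mul_le_mul_of_nonneg_right (h i) (abs_nonneg _))
    calc ‖v i * x i‖ ^ 2 = |v i * x i| ^ 2 := by rw [Real.norm_eq_abs]
      _ ≤ (c * |x i|) ^ 2 := by
          apply pow_le_pow_left₀ (abs_nonneg _) h1
      _ = c ^ 2 * ‖x i‖ ^ 2 := by rw [mul_pow, Real.norm_eq_abs]
  calc Real.sqrt (∑ i, ‖((toEuclideanCLM (𝕜 := ℝ) (Matrix.diagonal v)) x) i‖ ^ 2)
      ≤ Real.sqrt (c ^ 2 * ∑ i, ‖x i‖ ^ 2) := Real.sqrt_le_sqrt this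
    _ = c * Real.sqrt (∑ i, ‖x i‖ ^ 2) := by
        rw [Real.sqrt_mul (sq_nonneg c), Real.sqrt_sq hc]

lemma eig_bound {B : Matrix (Fin d) (Fin d) ℝ} (hB : B.IsHermitian) (j : Fin d) :
    |hB.eigenvalues j - 1| ≤ matOpNorm (B - 1) := by
  set v : EuclideanSpace ℝ (Fin d) := hB.eigenvectorBasis j with hv
  have hv1 : ‖v‖ = 1 := hB.eigenvectorBasis.orthonormal.1 j
  have happB : (toEuclideanCLM (𝕜 := ℝ) B) v = hB.eigenvalues j • v := by
    apply (WithLp.equiv 2 (Fin d → ℝ)).injective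
    rw [show ∀ (A : Matrix (Fin d) (Fin d) ℝ) (x : EuclideanSpace ℝ (Fin d)), WithLp.equiv 2 (Fin d → ℝ) (toEuclideanCLM (𝕜 := ℝ) A x) = Matrix.toLin' A (WithLp.equiv 2 _ x) from fun _ _ => rfl, Matrix.toLin'_apply]
    exact hB.mulVec_eigenvectorBasis j
  have happ : (toEuclideanCLM (𝕜 := ℝ) (B - 1)) v = (hB.eigenvalues j - 1) • v := by
    rw [_root_.map_sub, _root_.map_one, ContinuousLinearMap.sub_apply, ContinuousLinearMap.one_apply,
      happB, sub_smul, one_smul]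
  have hle := (toEuclideanCLM (𝕜 := ℝ) (B - 1)).le_opNorm v
  rw [happ, norm_smul, hv1, mul_one, mul_one, Real.norm_eq_abs] at hle
  exact hle

lemma abs_sqrt_sub_one_le {x : ℝ} (hx : 0 ≤ x) : |Real.sqrt x - 1| ≤ |x - 1| := by
  have h := Real.sq_sqrt hx
  have h2 := Real.sqrt_nonneg x
  rcases abs_cases (Real.sqrt x - 1) with ⟨h3, h3'⟩ | ⟨h3, h3'⟩ <;>
    rcases abs_cases (x - 1) with ⟨h4, h4'⟩ | ⟨h4, h4'⟩ <;> nlinarith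

lemma sqrt_key (B : Matrix (Fin d) (Fin d) ℝ) (hB : B.PosSemidef) :
    matOpNorm (hB.sqrt - 1) ≤ matOpNorm (B - 1) := by
  set U : Matrix (Fin d) (Fin d) ℝ := (hB.1.eigenvectorUnitary : Matrix (Fin d) (Fin d) ℝ) with hU
  have hU1 : U * star U = 1 := Matrix.mem_unitaryGroup_iff.mp hB.1.eigenvectorUnitary.2
  have hU2 : star U * U = 1 := Matrix.mem_unitaryGroup_iff'.mp hB.1.eigenvectorUnitary.2
  have hsqrt : hB.sqrt = U * Matrix.diagonal (fun j => Real.sqrt (hB.1.eigenvalues j)) * star U :=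
    rfl
  have hdecomp : hB.sqrt - 1
      = U * Matrix.diagonal (fun j => Real.sqrt (hB.1.eigenvalues j) - 1) * star U := by
    have h1 : (1 : Matrix (Fin d) (Fin d) ℝ) = U * 1 * star U := by rw [mul_one, hU1]
    rw [hsqrt]
    conv_lhs => rw [h1]
    rw [← Matrix.sub_mul, ← Matrix.mul_sub]
    congr 1
    congr 1
    rw [← Matrix.diagonal_one, Matrix.diagonal_sub]
  -- membership of the unitary in the CLM algebra
  have humem : (toEuclideanCLM (𝕜 := ℝ) U) ∈
      unitary (EuclideanSpace ℝ (Fin d) →L[ℝ] EuclideanSpace ℝ (Fin d)) := by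
    rw [Unitary.mem_iff]
    constructor
    · rw [← map_star, ← _root_.map_mul, hU2, _root_.map_one]
    · rw [← map_star, ← _root_.map_mul, hU1, _root_.map_one]
  have key : matOpNorm (hB.sqrt - 1)
      = matOpNorm (Matrix.diagonal (fun j => Real.sqrt (hB.1.eigenvalues j) - 1)) := by
    rw [hdecomp]
    unfold matOpNorm
    rw [_root_.map_mul, _root_.map_mul, map_star]
    rw [CStarRing.norm_mul_mem_unitary _ (Unitary.star_mem humem),
      CStarRing.norm_mem_unitary_mul _ humem]
  rw [key]
  apply matOpNorm_diagonal_le _ _ (matOpNorm_nonneg _)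
  intro i
  calc |Real.sqrt (hB.1.eigenvalues i) - 1| ≤ |hB.1.eigenvalues i - 1| :=
        abs_sqrt_sub_one_le (hB.eigenvalues_nonneg i)
    _ ≤ matOpNorm (B - 1) := eig_bound hB.1 i

/-- The "product with selected factors differentiated" function. -/
noncomputable def G (A : Fin k → Matrix (Fin d) (Fin d) ℝ) (L : List (Fin k))
    (u : Fin k → ℝ) : Matrix (Fin d) (Fin d) ℝ :=
  ((List.finRange k).map (fun i => if i ∈ L then A i else 1 + u i • A i)).prod

lemma G_update (A : Fin k → Matrix (Fin d) (Fin d) ℝ) (L : List (Fin k)) (j : Fin k)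
    (hj : j ∉ L) (t : Fin k → ℝ) :
    ∃ C, ∀ s, G A L (Function.update t j s) = C + s • G A (j :: L) t := by
  obtain ⟨l₁, l₂, hsplit⟩ := List.append_of_mem (List.mem_finRange j)
  have hnd : (l₁ ++ j :: l₂).Nodup := hsplit ▸ List.nodup_finRange k
  have hj1 : j ∉ l₁ := fun h =>
    (List.disjoint_of_nodup_append hnd) h (List.mem_cons_self (a := j) (l := l₂))
  have hj2 : j ∉ l₂ := ((List.nodup_cons.mp hnd.of_append_right).1)
  set g : Fin k → Matrix (Fin d) (Fin d) ℝ :=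
    fun i => if i ∈ j :: L then A i else 1 + t i • A i with hg
  set P₁ : Matrix (Fin d) (Fin d) ℝ := (l₁.map g).prod with hP₁
  set P₂ : Matrix (Fin d) (Fin d) ℝ := (l₂.map g).prod with hP₂
  have hfg : ∀ s i, i ≠ j →
      (if i ∈ L then A i else 1 + Function.update t j s i • A i) = g i := by
    intro s i hi
    rw [Function.update_of_ne hi]
    rw [hg]
    by_cases h : i ∈ L
    · simp [h, List.mem_cons, hi]
    · simp [h, List.mem_cons, hi]
  have hGL : ∀ s, G A L (Function.update t j s) = P₁ * ((1 + s • A j) * P₂) := by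
    intro s
    unfold G
    rw [hsplit, List.map_append, List.prod_append, List.map_cons, List.prod_cons]
    congr 1
    · rw [hP₁]
      congr 1
      apply List.map_congr_left
      intro i hi
      exact hfg s i (fun h => hj1 (h ▸ hi))
    congr 1
    · rw [Function.update_self, if_neg hj]
    · rw [hP₂]
      congr 1
      apply List.map_congr_left
      intro i hi
      exact hfg s i (fun h => hj2 (h ▸ hi))
  have hGjL : G A (j :: L) t = P₁ * (A j * P₂) := by
    unfold G
    rw [hsplit, List.map_append, List.prod_append, List.map_cons, List.prod_cons]
    congr 2
    rw [if_pos (List.mem_cons_self (a := j) (l := L))]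
  refine ⟨P₁ * P₂, fun s => ?_⟩
  rw [hGL s, hGjL]
  rw [add_mul, one_mul, smul_mul_assoc, mul_add, mul_smul_comm]

lemma pderivSeq_G (A : Fin k → Matrix (Fin d) (Fin d) ℝ) :
    ∀ L : List (Fin k), L.Nodup → ∀ t, pderivSeq L (G A []) t = G A L t := by
  intro L
  induction L with
  | nil => intro _ t; rfl
  | cons j L ih =>
    intro hnd t
    have hjL : j ∉ L := (List.nodup_cons.mp hnd).1
    have hLnd : L.Nodup := (List.nodup_cons.mp hnd).2
    show deriv (fun s => pderivSeq L (G A []) (Function.update t j s)) (t j) = _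
    have hfun : (fun s => pderivSeq L (G A []) (Function.update t j s))
        = fun s => G A L (Function.update t j s) := by
      funext s; exact ih hLnd _
    rw [hfun]
    obtain ⟨C, hC⟩ := G_update A L j hjL t
    have heq : (fun s => G A L (Function.update t j s))
        = fun s => C + s • G A (j :: L) t := funext hC
    rw [heq]
    have hd : HasDerivAt (fun s : ℝ => C + s • G A (j :: L) t) (G A (j :: L) t) (t j) := by
      have h := ((hasDerivAt_id (t j)).smul_const (G A (j :: L) t)).const_add C
      rw [one_smul] at h
      exact h
    exact hd.deriv

lemma matOpNorm_list_prod_le (f : Fin k → Matrix (Fin d) (Fin d) ℝ) (c : Fin k → ℝ)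
    (hc : ∀ i, 0 ≤ c i) (h : ∀ i, matOpNorm (f i) ≤ c i) :
    ∀ l : List (Fin k), matOpNorm ((l.map f).prod) ≤ (l.map c).prod
  | [] => by simpa using matOpNorm_one_le
  | (a :: l) => by
    simp only [List.map_cons, List.prod_cons]
    calc matOpNorm (f a * (l.map f).prod)
        ≤ matOpNorm (f a) * matOpNorm ((l.map f).prod) := matOpNorm_mul_le _ _
      _ ≤ c a * (l.map c).prod :=
          mul_le_mul (h a) (matOpNorm_list_prod_le f c hc h l) (matOpNorm_nonneg _) (hc a)

end Stmt13Aux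

/-- Let `W₁,…,W_k` be positive semi-definite, `δ_i := ‖W_i − I‖`
(operator norm), `V_i(t) := I + t(W_i^{1/2} − I)`, and `R(t₁,…,t_k) = V₁(t₁)⋯V_k(t_k)`.
Then for any subset `T ⊆ {t₁,…,t_k}` (given by a duplicate-free list `L`) and any
`t ∈ [0,1]^k`:
`‖∂_T R‖ ≤ (∏_{i∈T} δ_i/(1+δ_i)) · ∏_{i=1}^k (1+δ_i)`. -/
theorem stmt13 {d k : ℕ} (W : Fin k → Matrix (Fin d) (Fin d) ℝ)
    (hW : ∀ i, (W i).PosSemidef)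
    (L : List (Fin k)) (hL : L.Nodup)
    (t : Fin k → ℝ) (ht : ∀ i, t i ∈ Set.Icc (0 : ℝ) 1) :
    matOpNorm
        (pderivSeq L
          (fun u => ((List.finRange k).map
            (fun i => (1 : Matrix (Fin d) (Fin d) ℝ) + u i • ((hW i).sqrt - 1))).prod) t)
      ≤ (∏ i ∈ L.toFinset, matOpNorm (W i - 1) / (1 + matOpNorm (W i - 1)))
          * ∏ i : Fin k, (1 + matOpNorm (W i - 1)) := by
  classical
  set A : Fin k → Matrix (Fin d) (Fin d) ℝ := fun i => (hW i).sqrt - 1 with hA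
  set δ : Fin k → ℝ := fun i => matOpNorm (W i - 1) with hδ
  have hδ0 : ∀ i, 0 ≤ δ i := fun i => Stmt13Aux.matOpNorm_nonneg _
  have hF : (fun u => ((List.finRange k).map
      (fun i => (1 : Matrix (Fin d) (Fin d) ℝ) + u i • ((hW i).sqrt - 1))).prod)
      = Stmt13Aux.G A [] := by
    funext u
    unfold Stmt13Aux.G
    simp
    rfl
  rw [hF, Stmt13Aux.pderivSeq_G A L hL t]
  set c : Fin k → ℝ := fun i => if i ∈ L then δ i else 1 + δ i with hc
  have hbound : matOpNorm (Stmt13Aux.G A L t)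
      ≤ ((List.finRange k).map c).prod := by
    apply Stmt13Aux.matOpNorm_list_prod_le
    · intro i
      by_cases h : i ∈ L
      · simp only [hc, h, if_true]; exact hδ0 i
      · simp only [hc, h, if_false]; linarith [hδ0 i]
    · intro i
      by_cases h : i ∈ L
      · simp only [hc, h, if_true]
        exact Stmt13Aux.sqrt_key _ (hW i)
      · simp only [hc, h, if_false]
        calc matOpNorm (1 + t i • A i)
            ≤ matOpNorm 1 + matOpNorm (t i • A i) := Stmt13Aux.matOpNorm_add_le _ _
          _ ≤ 1 + δ i := by
              apply add_le_add Stmt13Aux.matOpNorm_one_le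
              rw [Stmt13Aux.matOpNorm_smul]
              have hti := ht i
              have habs : |t i| ≤ 1 := abs_le.mpr ⟨by linarith [hti.1], hti.2⟩
              calc |t i| * matOpNorm (A i) ≤ 1 * δ i :=
                    mul_le_mul habs (Stmt13Aux.sqrt_key _ (hW i))
                      (Stmt13Aux.matOpNorm_nonneg _) zero_le_one
                _ = δ i := one_mul _
  refine hbound.trans (le_of_eq ?_)
  rw [← Fin.prod_univ_def]
  set T : Finset (Fin k) := L.toFinset with hT
  have h1 : ∀ i, (1 : ℝ) + δ i ≠ 0 := fun i => by have := hδ0 i; linarith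
  have lhs_eq : ∏ i, c i = (∏ i ∈ T, δ i) * ∏ i ∈ Tᶜ, (1 + δ i) := by
    rw [← Finset.prod_mul_prod_compl T c]
    congr 1
    · exact Finset.prod_congr rfl fun i hi => by
        simp only [hc, if_pos (List.mem_toFinset.mp (hT ▸ hi))]
    · exact Finset.prod_congr rfl fun i hi => by
        have : i ∉ L := fun h => (Finset.mem_compl.mp hi) (List.mem_toFinset.mpr h)
        simp only [hc, if_neg this]
  have rhs_eq : (∏ i ∈ T, δ i / (1 + δ i)) * ∏ i, (1 + δ i)
      = (∏ i ∈ T, δ i) * ∏ i ∈ Tᶜ, (1 + δ i) := by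
    rw [← Finset.prod_mul_prod_compl T (fun i => 1 + δ i), ← mul_assoc,
      ← Finset.prod_mul_distrib]
    congr 1
    exact Finset.prod_congr rfl fun i _ => div_mul_cancel₀ _ (h1 i)
  rw [lhs_eq, ← rhs_eq]
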